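/- Let n ≥ 1, let D be a real n×n diagonal matrix with every diagonal entry ≥ d for some d > 0, let τ > 0, and let F ∈ ℝⁿ. Let 𝒞 ⊆ ℝⁿ and let Ã be a function from ℝⁿ to real n×n matrices such that for every P ∈ 𝒞 the matrix D + τÃ(P) is invertible; define φ(P) = (D + τÃ(P))⁻¹F. Suppose there are constants C ≥ 0 and C_L ≥ 1 such that for all P, Q ∈ 𝒞: ‖Ã(P)‖_{∞,op} ≤ C, ‖φ(P)‖_∞ ≤ C, and ‖Ã(P) − Ã(Q)‖_{∞,op} ≤ C_L ‖P − Q‖_∞. Set τ_C = d/(2 C_L C). Then for every τ with 0 < τ < τ_C, the map φ is a contraction on 𝒞: for all P, Q ∈ 𝒞, ‖φ(P) − φ(Q)‖_∞ ≤ α ‖P − Q‖_∞ with contraction constant α = 2 C_L C τ / d ∈ (0, 1). -/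
import Mathlib


open Matrix BigOperators

/-- The maximum norm `‖v‖_∞ = max_k |v_k|` of a vector in `ℝⁿ`. -/
def vecInfNorm {n : ℕ} [NeZero n] (v : Fin n → ℝ) : ℝ :=
  Finset.univ.sup' Finset.univ_nonempty fun k => |v k|

/-- The operator norm induced by `‖·‖_∞`, i.e. the maximum absolute row sum
`‖M‖_{∞,op} = max_i ∑_j |M_{ij}|`. -/
def matInfNorm {n : ℕ} [NeZero n] (M : Matrix (Fin n) (Fin n) ℝ) : ℝ :=
  Finset.univ.sup' Finset.univ_nonempty fun i => ∑ j, |M i j|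


lemma abs_le_vecInfNorm {n : ℕ} [NeZero n] (v : Fin n → ℝ) (k : Fin n) :
    |v k| ≤ vecInfNorm v := by
  exact Finset.le_sup' (fun k => |v k|) (Finset.mem_univ k)

lemma vecInfNorm_nonneg {n : ℕ} [NeZero n] (v : Fin n → ℝ) : 0 ≤ vecInfNorm v := by
  obtain ⟨k, -⟩ := (Finset.univ_nonempty : (Finset.univ : Finset (Fin n)).Nonempty)
  exact (abs_nonneg (v k)).trans (abs_le_vecInfNorm v k)

lemma rowsum_le_matInfNorm {n : ℕ} [NeZero n] (M : Matrix (Fin n) (Fin n) ℝ) (k : Fin n) :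
    ∑ j, |M k j| ≤ matInfNorm M := by
  exact Finset.le_sup' (fun i => ∑ j, |M i j|) (Finset.mem_univ k)

lemma abs_mulVec_le {n : ℕ} [NeZero n] (M : Matrix (Fin n) (Fin n) ℝ) (v : Fin n → ℝ)
    (k : Fin n) : |(M *ᵥ v) k| ≤ matInfNorm M * vecInfNorm v := by
  calc |(M *ᵥ v) k| = |∑ j, M k j * v j| := by
        simp [Matrix.mulVec, dotProduct]
    _ ≤ ∑ j, |M k j * v j| := Finset.abs_sum_le_sum_abs _ _
    _ = ∑ j, |M k j| * |v j| := by simp [abs_mul]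
    _ ≤ ∑ j, |M k j| * vecInfNorm v := by
        refine Finset.sum_le_sum fun j _ => ?_
        exact mul_le_mul_of_nonneg_left (abs_le_vecInfNorm v j) (abs_nonneg _)
    _ = (∑ j, |M k j|) * vecInfNorm v := by rw [Finset.sum_mul]
    _ ≤ matInfNorm M * vecInfNorm v :=
        mul_le_mul_of_nonneg_right (rowsum_le_matInfNorm M k) (vecInfNorm_nonneg v)

lemma vecInfNorm_sub_comm {n : ℕ} [NeZero n] (P Q : Fin n → ℝ) :
    vecInfNorm (P - Q) = vecInfNorm (Q - P) := by
  unfold vecInfNorm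
  exact Finset.sup'_congr _ rfl (fun k _ => by simp [Pi.sub_apply, abs_sub_comm])

/-- the Gummel fixed-point map `φ(P) = (D + τ Ã(P))⁻¹ F` is a
contraction on `𝒞` with constant `α = 2 C_L C τ / d ∈ (0,1)` whenever
`0 < τ < τ_C = d / (2 C_L C)`. -/
theorem gummel_map_contraction
    (n : ℕ) [NeZero n] (d : ℝ) (hd : 0 < d)
    (dv : Fin n → ℝ) (hdv : ∀ k, d ≤ dv k)
    (τ : ℝ) (F : Fin n → ℝ) (𝒞 : Set (Fin n → ℝ))
    (Atil : (Fin n → ℝ) → Matrix (Fin n) (Fin n) ℝ)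
    (hinv : ∀ P ∈ 𝒞, IsUnit (Matrix.diagonal dv + τ • Atil P).det)
    (C CL : ℝ) (hC : 0 ≤ C) (hCL : 1 ≤ CL)
    (hAbound : ∀ P ∈ 𝒞, matInfNorm (Atil P) ≤ C)
    (hphibound : ∀ P ∈ 𝒞,
      vecInfNorm ((Matrix.diagonal dv + τ • Atil P)⁻¹ *ᵥ F) ≤ C)
    (hLip : ∀ P ∈ 𝒞, ∀ Q ∈ 𝒞,
      matInfNorm (Atil P - Atil Q) ≤ CL * vecInfNorm (P - Q))
    (hτ : 0 < τ) (hτC : τ < d / (2 * CL * C)) :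
    (0 < 2 * CL * C * τ / d ∧ 2 * CL * C * τ / d < 1) ∧
    ∀ P ∈ 𝒞, ∀ Q ∈ 𝒞,
      vecInfNorm ((Matrix.diagonal dv + τ • Atil P)⁻¹ *ᵥ F
          - (Matrix.diagonal dv + τ • Atil Q)⁻¹ *ᵥ F)
        ≤ (2 * CL * C * τ / d) * vecInfNorm (P - Q) := by
  have hCL0 : (0:ℝ) < CL := lt_of_lt_of_le one_pos hCL
  have hC0 : 0 < C := by
    rcases hC.lt_or_eq with h | h
    · exact h
    · exfalso; rw [← h] at hτC; simp at hτC; linarith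
  have hden : 0 < 2 * CL * C := by positivity
  have hτd : 2 * CL * C * τ < d := by
    have := (lt_div_iff₀ hden).mp hτC; linarith
  refine ⟨⟨by positivity, (div_lt_one hd).mpr hτd⟩, ?_⟩
  intro P hP Q hQ
  set MP := Matrix.diagonal dv + τ • Atil P with hMP
  set MQ := Matrix.diagonal dv + τ • Atil Q with hMQ
  set φP := MP⁻¹ *ᵥ F with hφPdef
  set φQ := MQ⁻¹ *ᵥ F with hφQdef
  have hφP : MP *ᵥ φP = F := by
    rw [hφPdef, Matrix.mulVec_mulVec, Matrix.mul_nonsing_inv _ (hinv P hP),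
      Matrix.one_mulVec]
  have hφQ : MQ *ᵥ φQ = F := by
    rw [hφQdef, Matrix.mulVec_mulVec, Matrix.mul_nonsing_inv _ (hinv Q hQ),
      Matrix.one_mulVec]
  set Δ := φP - φQ with hΔ
  have hMPQ : MP = MQ + τ • (Atil P - Atil Q) := by
    rw [hMP, hMQ, smul_sub]; abel
  have h2 : MP *ᵥ φQ = F + τ • ((Atil P - Atil Q) *ᵥ φQ) := by
    rw [hMPQ, Matrix.add_mulVec, hφQ, Matrix.smul_mulVec]
  have h1 : MP *ᵥ Δ = τ • ((Atil Q - Atil P) *ᵥ φQ) := by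
    rw [hΔ, Matrix.mulVec_sub, hφP, h2, Matrix.sub_mulVec, Matrix.sub_mulVec,
      smul_sub, smul_sub]
    abel
  have key : Matrix.diagonal dv *ᵥ Δ
      = τ • ((Atil Q - Atil P) *ᵥ φQ) - τ • (Atil P *ᵥ Δ) := by
    rw [← h1, hMP, Matrix.add_mulVec, Matrix.smul_mulVec]
    abel
  -- pick the maximizing index
  obtain ⟨k, -, hk⟩ := Finset.exists_mem_eq_sup'
    (Finset.univ_nonempty : (Finset.univ : Finset (Fin n)).Nonempty)
    (fun k => |Δ k|)
  have hNk : vecInfNorm Δ = |Δ k| := hk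
  have e1 : dv k * Δ k
      = τ * ((Atil Q - Atil P) *ᵥ φQ) k - τ * ((Atil P *ᵥ Δ) k) := by
    have := congrFun key k
    simpa [Matrix.mulVec_diagonal, Pi.smul_apply, smul_eq_mul, Pi.sub_apply]
      using this
  have hX : 0 ≤ vecInfNorm (P - Q) := vecInfNorm_nonneg _
  have hN : 0 ≤ vecInfNorm Δ := vecInfNorm_nonneg _
  have b1 : |((Atil Q - Atil P) *ᵥ φQ) k| ≤ CL * vecInfNorm (P - Q) * C := by
    calc |((Atil Q - Atil P) *ᵥ φQ) k|
        ≤ matInfNorm (Atil Q - Atil P) * vecInfNorm φQ := abs_mulVec_le _ _ _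
      _ ≤ (CL * vecInfNorm (P - Q)) * C := by
          apply mul_le_mul
          · have := hLip Q hQ P hP
            rwa [vecInfNorm_sub_comm Q P] at this
          · exact hphibound Q hQ
          · exact vecInfNorm_nonneg _
          · positivity
  have b2 : |(Atil P *ᵥ Δ) k| ≤ C * vecInfNorm Δ := by
    calc |(Atil P *ᵥ Δ) k|
        ≤ matInfNorm (Atil P) * vecInfNorm Δ := abs_mulVec_le _ _ _
      _ ≤ C * vecInfNorm Δ :=
          mul_le_mul_of_nonneg_right (hAbound P hP) hN
  have main : d * vecInfNorm Δ
      ≤ τ * (CL * vecInfNorm (P - Q) * C) + τ * (C * vecInfNorm Δ) := by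
    have hdk : 0 ≤ dv k := le_trans hd.le (hdv k)
    have h3 : d * vecInfNorm Δ ≤ |dv k * Δ k| := by
      rw [abs_mul, abs_of_nonneg hdk, hNk]
      exact mul_le_mul_of_nonneg_right (hdv k) (abs_nonneg _)
    have h4 : |dv k * Δ k|
        ≤ τ * (CL * vecInfNorm (P - Q) * C) + τ * (C * vecInfNorm Δ) := by
      rw [e1]
      calc |τ * ((Atil Q - Atil P) *ᵥ φQ) k - τ * ((Atil P *ᵥ Δ) k)|
          ≤ |τ * ((Atil Q - Atil P) *ᵥ φQ) k| + |τ * ((Atil P *ᵥ Δ) k)| :=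
            abs_sub _ _
        _ ≤ τ * (CL * vecInfNorm (P - Q) * C) + τ * (C * vecInfNorm Δ) := by
            rw [abs_mul, abs_mul, abs_of_pos hτ]
            exact add_le_add (mul_le_mul_of_nonneg_left b1 hτ.le)
              (mul_le_mul_of_nonneg_left b2 hτ.le)
    linarith
  rw [div_mul_eq_mul_div, le_div_iff₀ hd]
  nlinarith [mul_nonneg (by linarith : (0:ℝ) ≤ d - 2 * CL * C * τ) hN,
    mul_nonneg (mul_nonneg (mul_nonneg (by linarith : (0:ℝ) ≤ CL - 1) hτ.le) hC) hN]
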